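/- If f : (X, τ_X) → (Y, τ_Y) is weakly continuous and Y is finite, then f : (X, (τ_θ)_X) → (Y, (τ_θ)_Y) is continuous (f is τ_θ-continuous). -/

import Mathlib

open Set Topology TopologicalSpace

/-- A set `U` is θ-open if every point of `U` has an open neighborhood whose
closure lies in `U`. -/
def ThetaOpen {X : Type*} [TopologicalSpace X] (U : Set X) : Prop :=
  ∀ x ∈ U, ∃ V : Set X, IsOpen V ∧ x ∈ V ∧ closure V ⊆ U

/-- The topology of θ-open sets. -/
def thetaTopology (X : Type*) [TopologicalSpace X] : TopologicalSpace X :=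
  TopologicalSpace.generateFrom {U : Set X | ThetaOpen U}

/-- θ-closure of a set. -/
def thetaCl {X : Type*} [TopologicalSpace X] (A : Set X) : Set X :=
  {x | ∀ U : Set X, IsOpen U → x ∈ U → (closure U ∩ A).Nonempty}

/-- An ideal of subsets of `X`. -/
structure SetIdeal (X : Type*) where
  sets : Set (Set X)
  empty_mem : ∅ ∈ sets
  subset_mem : ∀ {A B : Set X}, A ∈ sets → B ⊆ A → B ∈ sets
  union_mem : ∀ {A B : Set X}, A ∈ sets → B ∈ sets → A ∪ B ∈ sets

/-- The local function `A*` in an ideal topological space. -/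
def locFun {X : Type*} [TopologicalSpace X] (I : SetIdeal X) (A : Set X) : Set X :=
  {x | ∀ U : Set X, IsOpen U → x ∈ U → U ∩ A ∉ I.sets}

/-- The local closure function `Γ(A)` in an ideal topological space. -/
def locClFun {X : Type*} [TopologicalSpace X] (I : SetIdeal X) (A : Set X) : Set X :=
  {x | ∀ U : Set X, IsOpen U → x ∈ U → closure U ∩ A ∉ I.sets}

/-- `ψ_Γ(A) = X \ Γ(X \ A)`. -/
def psiGamma {X : Type*} [TopologicalSpace X] (I : SetIdeal X) (A : Set X) : Set X :=
  (locClFun I Aᶜ)ᶜ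

/-- The topology `σ` determined by `ψ_Γ`. -/
def sigmaTopology {X : Type*} [TopologicalSpace X] (I : SetIdeal X) : TopologicalSpace X :=
  TopologicalSpace.generateFrom {A : Set X | A ⊆ psiGamma I A}

/-- The topology `τ*` generated by the Kuratowski closure `Cl*(A) = A ∪ A*`. -/
def starTopology {X : Type*} [TopologicalSpace X] (I : SetIdeal X) : TopologicalSpace X :=
  TopologicalSpace.generateFrom {U : Set X | locFun I Uᶜ ⊆ Uᶜ}

/-- Transfinite iteration of the local closure function. -/
noncomputable def CLiter {X : Type*} [TopologicalSpace X] (I : SetIdeal X) (A : Set X)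
    (α : Ordinal) : Set X :=
  Ordinal.limitRecOn α A (fun _ S => S ∪ locClFun I S)
    (fun o _ ih => ⋃ (β : Ordinal) (h : β < o), ih β h)

/-- θ-continuity. -/
def ThetaContinuous {X Y : Type*} [TopologicalSpace X] [TopologicalSpace Y] (f : X → Y) : Prop :=
  ∀ x : X, ∀ V : Set Y, IsOpen V → f x ∈ V →
    ∃ U : Set X, IsOpen U ∧ x ∈ U ∧ f '' closure U ⊆ closure V

/-- Weak continuity. -/
def WeaklyContinuous {X Y : Type*} [TopologicalSpace X] [TopologicalSpace Y] (f : X → Y) : Prop :=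
  ∀ x : X, ∀ V : Set Y, IsOpen V → f x ∈ V →
    ∃ U : Set X, IsOpen U ∧ x ∈ U ∧ f '' U ⊆ closure V


lemma weakCont_closure_subset_thetaCl {X Y : Type*} [TopologicalSpace X] [TopologicalSpace Y]
    {f : X → Y} (hf : WeaklyContinuous f) (A : Set X) :
    f '' closure A ⊆ thetaCl (f '' A) := by
  rintro _ ⟨x, hx, rfl⟩ O hO hfxO
  obtain ⟨U, hU, hxU, hUO⟩ := hf x O hO hfxO
  obtain ⟨a, haU, haA⟩ := (mem_closure_iff).1 hx U hU hxU
  exact ⟨f a, hUO ⟨a, haU, rfl⟩, ⟨a, haA, rfl⟩⟩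

lemma thetaOpen_finite_clopen {Y : Type*} [TopologicalSpace Y] [Finite Y] {V : Set Y}
    (hV : ThetaOpen V) : IsOpen V ∧ IsClosed V := by
  classical
  choose W hWopen hmem hWcl using hV
  set W' : Y → Set Y := fun y => if h : y ∈ V then W y h else ∅ with hW'
  have hW'open : ∀ y, IsOpen (W' y) := by
    intro y; by_cases h : y ∈ V <;> simp [hW', h, hWopen]
  have hW'cl : ∀ y, closure (W' y) ⊆ V := by
    intro y; by_cases h : y ∈ V <;> simp [hW', h, hWcl]
  have hVeq : V = ⋃ y ∈ V, W' y := by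
    apply Set.Subset.antisymm
    · intro y hy
      exact Set.mem_biUnion hy (by simp [hW', hy, hmem])
    · intro y hy
      obtain ⟨z, _, hyW⟩ := Set.mem_iUnion₂.1 hy
      exact hW'cl z (subset_closure hyW)
  have hopen : IsOpen V := by
    rw [hVeq]; exact isOpen_biUnion fun y _ => hW'open y
  refine ⟨hopen, ?_⟩
  have hclose : closure V ⊆ V := by
    conv_lhs => rw [hVeq]
    rw [(Set.toFinite V).closure_biUnion]
    exact Set.iUnion₂_subset fun y _ => hW'cl y
  exact isClosed_of_closure_subset hclose

lemma thetaCl_subset_of_clopen {Y : Type*} [TopologicalSpace Y] {V : Set Y}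
    (ho : IsOpen V) (hc : IsClosed V) : thetaCl V ⊆ V := by
  intro y hy
  by_contra hyV
  obtain ⟨z, hz1, hz2⟩ := hy Vᶜ hc.isOpen_compl hyV
  rw [ho.isClosed_compl.closure_eq] at hz1
  exact hz1 hz2

/-- a weakly continuous map into a finite space is continuous for
the θ-topologies. -/
theorem stmt19 {X Y : Type*} [TopologicalSpace X] [TopologicalSpace Y]
    (f : X → Y) (hf : WeaklyContinuous f) [Finite Y] :
    Continuous[thetaTopology X, thetaTopology Y] f := by
  rw [thetaTopology, thetaTopology, continuous_generateFrom_iff]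
  intro V hV
  obtain ⟨hVo, hVc⟩ := thetaOpen_finite_clopen hV
  apply TopologicalSpace.GenerateOpen.basic
  intro x hx
  obtain ⟨U, hU, hxU, hUV⟩ := hf x V hVo hx
  rw [hVc.closure_eq] at hUV
  refine ⟨U, hU, hxU, ?_⟩
  intro z hz
  have h1 : f z ∈ thetaCl (f '' U) :=
    weakCont_closure_subset_thetaCl hf U ⟨z, hz, rfl⟩
  have h2 : thetaCl (f '' U) ⊆ thetaCl V := fun y hy O hO hyO => by
    obtain ⟨w, hw1, hw2⟩ := hy O hO hyO
    exact ⟨w, hw1, hUV hw2⟩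
  exact thetaCl_subset_of_clopen hVo hVc (h2 h1)
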